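/- Safety of the learned barrier controller: let x : ℝ → ℝⁿ be a continuously differentiable curve, let D ⊆ ℝⁿ be an open set containing the image of x, let f : D → ℝⁿ and g : D → ℝⁿˣᵐ be locally Lipschitz, let ĥ : D → ℝ be continuously differentiable (the synthesized barrier function), and let α : ℝ → ℝ be a locally Lipschitz extended class 𝒦 function. Suppose x solves ẋ(t) = f(x(t)) + g(x(t))·u(x(t)) where the continuous control u : D → ℝᵐ satisfies Dĥ(y)[f(y) + g(y)·u(y)] ≥ -α(ĥ(y)) for all y ∈ D. Let S ⊆ D (the true unsafe region) satisfy S ⊆ Ŝ, where Ŝ = {y ∈ D : ĥ(y) ≤ 0} is the estimated unsafe region, and suppose moreover S ∩ {y ∈ D : ĥ(y) = 0} = ∅ (the estimate strictly over-approximates S). If ĥ(x(0)) ≥ 0, then ĥ(x(t)) ≥ 0 for all t ≥ 0, and consequently x(t) ∉ S for all t ≥ 0. -/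

import Mathlib

open Topology

/-- **Safety of the learned barrier controller (Theorem 2).**
Let `x : ℝ → ℝⁿ` be a continuously differentiable curve, `D ⊆ ℝⁿ` open containing the
image of `x`, `f` and `g` locally Lipschitz, `hhat : D → ℝ` continuously differentiable
(the synthesized barrier function), and `α` a locally Lipschitz extended class-𝒦
function.  Suppose `x` solves `ẋ = f(x) + g(x)·u(x)` where the continuous control `u`
satisfies `Dhhat(y)[f(y) + g(y)·u(y)] ≥ -α(hhat(y))` on `D`.  Let `S ⊆ D` satisfy `S ⊆ Ŝ`
where `Ŝ = {y ∈ D : hhat(y) ≤ 0}`, and suppose `S ∩ {y ∈ D : hhat(y) = 0} = ∅`.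
If `hhat(x(0)) ≥ 0` then `hhat(x(t)) ≥ 0` for all `t ≥ 0`, and consequently `x(t) ∉ S`. -/
theorem learned_barrier_controller_safety
    {n m : ℕ}
    (x : ℝ → EuclideanSpace ℝ (Fin n))
    (D : Set (EuclideanSpace ℝ (Fin n)))
    (hD : IsOpen D)
    (hximg : ∀ t : ℝ, x t ∈ D)
    (f : EuclideanSpace ℝ (Fin n) → EuclideanSpace ℝ (Fin n))
    (g : EuclideanSpace ℝ (Fin n) →
      (EuclideanSpace ℝ (Fin m) →L[ℝ] EuclideanSpace ℝ (Fin n)))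
    (u : EuclideanSpace ℝ (Fin n) → EuclideanSpace ℝ (Fin m))
    (hf_lip : ∀ y ∈ D, ∃ K : NNReal, ∃ s ∈ 𝓝[D] y, LipschitzOnWith K f s)
    (hg_lip : ∀ y ∈ D, ∃ K : NNReal, ∃ s ∈ 𝓝[D] y, LipschitzOnWith K g s)
    (hu_cont : ContinuousOn u D)
    (hhat : EuclideanSpace ℝ (Fin n) → ℝ)
    (hhhat_smooth : ContDiffOn ℝ 1 hhat D)
    (α : ℝ → ℝ)
    (hα_lip : LocallyLipschitz α)
    (hα_mono : StrictMono α)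
    (hα_zero : α 0 = 0)
    (hx_smooth : ContDiff ℝ 1 x)
    (hx_ode : ∀ t : ℝ, 0 ≤ t → HasDerivAt x (f (x t) + g (x t) (u (x t))) t)
    (h_constraint : ∀ y ∈ D, fderiv ℝ hhat y (f y + g y (u y)) ≥ -α (hhat y))
    (S : Set (EuclideanSpace ℝ (Fin n)))
    (hS_sub_D : S ⊆ D)
    (hS_sub : S ⊆ {y ∈ D | hhat y ≤ 0})
    (hS_strict : S ∩ {y ∈ D | hhat y = 0} = ∅)
    (h_init : hhat (x 0) ≥ 0) :
    ∀ t : ℝ, 0 ≤ t → hhat (x t) ≥ 0 ∧ x t ∉ S := by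
  set w : ℝ → ℝ := fun s => hhat (x s) with hw_def
  have hdiff : ∀ t : ℝ, DifferentiableAt ℝ hhat (x t) := fun t =>
    (hhhat_smooth.contDiffAt (hD.mem_nhds (hximg t))).differentiableAt one_ne_zero
  have hw_deriv : ∀ t : ℝ, 0 ≤ t →
      HasDerivAt w (fderiv ℝ hhat (x t) (f (x t) + g (x t) (u (x t)))) t := fun t ht =>
    ((hdiff t).hasFDerivAt).comp_hasDerivAt t (hx_ode t ht)
  have hw_cont : Continuous w := continuous_iff_continuousAt.mpr fun t =>
    ((hdiff t).continuousAt).comp hx_smooth.continuous.continuousAt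
  have key : ∀ t : ℝ, 0 ≤ t → 0 ≤ w t := by
    intro t₁ ht₁
    by_contra hneg
    push_neg at hneg
    set A : Set ℝ := Set.Icc 0 t₁ ∩ {s | 0 ≤ w s} with hA_def
    have hA_ne : A.Nonempty := ⟨0, ⟨le_rfl, ht₁⟩, h_init⟩
    have hA_closed : IsClosed A :=
      isClosed_Icc.inter (isClosed_le continuous_const hw_cont)
    have hA_cpt : IsCompact A :=
      (isCompact_Icc).of_isClosed_subset hA_closed Set.inter_subset_left
    obtain ⟨hT_mem, hT_Sup⟩ : sSup A ∈ A ∧ sSup A = sSup A :=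
      ⟨hA_cpt.sSup_mem hA_ne, rfl⟩
    set T := sSup A with hT_def
    obtain ⟨⟨hT0, hTt₁⟩, hwT⟩ := hT_mem
    have hTne : T ≠ t₁ := by
      intro h; rw [h] at hwT; exact absurd hwT (not_le.mpr hneg)
    have hTlt : T < t₁ := lt_of_le_of_ne hTt₁ hTne
    have hneglt : ∀ s ∈ Set.Ioo T t₁, w s < 0 := by
      intro s hs
      by_contra hc
      push_neg at hc
      have : s ∈ A := ⟨⟨hT0.trans hs.1.le, hs.2.le⟩, hc⟩
      exact absurd (le_csSup hA_cpt.bddAbove this) (not_le.mpr hs.1)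
    have hmono : StrictMonoOn w (Set.Icc T t₁) := by
      apply strictMonoOn_of_deriv_pos (convex_Icc T t₁) hw_cont.continuousOn
      intro s hs
      rw [interior_Icc] at hs
      have hs0 : 0 ≤ s := hT0.trans hs.1.le
      rw [(hw_deriv s hs0).deriv]
      have h1 : fderiv ℝ hhat (x s) (f (x s) + g (x s) (u (x s))) ≥ -α (hhat (x s)) :=
        h_constraint (x s) (hximg s)
      have h2 : α (w s) < 0 := hα_zero ▸ hα_mono (hneglt s hs)
      have : (0 : ℝ) < -α (w s) := by linarith
      exact lt_of_lt_of_le this h1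
    have hwT2 : 0 ≤ w T := hwT
    have : w T < w t₁ := hmono ⟨le_rfl, hTt₁⟩ ⟨hTt₁, le_rfl⟩ hTlt
    linarith
  intro t ht
  refine ⟨key t ht, fun hS => ?_⟩
  have h1 : hhat (x t) ≤ 0 := (hS_sub hS).2
  have h2 : hhat (x t) = 0 := le_antisymm h1 (key t ht)
  have : x t ∈ S ∩ {y ∈ D | hhat y = 0} := ⟨hS, hximg t, h2⟩
  rw [hS_strict] at this
  exact this
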